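/- Let μ0 be a mean-zero Gaussian measure on a separable Banach space with μ0(X) = 1 for a Banach space X, and define probability measures μ and μ^N by dμ/dμ0(u) = Z^{-1} exp(−Φ(u)) and dμ^N/dμ0(u) = (Z^N)^{-1} exp(−Φ^N(u)), where Z = ∫_X exp(−Φ(u)) dμ0(u) and Z^N = ∫_X exp(−Φ^N(u)) dμ0(u). Assume Φ and Φ^N satisfy, with constants uniform in N: (i) for every ε > 0 there is M = M(ε) ∈ R such that Φ(u) ≥ M − ε‖u‖_X² for all u ∈ X (and the same for Φ^N); (ii) for every r > 0 there is L(r) > 0 such that Φ(u) ≤ L(r) for all u with ‖u‖_X < r (and the same for Φ^N). Assume also that for any ε > 0 there is K = K(ε) > 0 such that |Φ(u) − Φ^N(u)| ≤ K exp(ε‖u‖_X²) ψ(N) for all u ∈ X, where ψ(N) → 0 as N → ∞. Then there is a constant C, independent of N, such that d_Hell(μ, μ^N) ≤ C ψ(N). -/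

import Mathlib

/-!
STATEMENT 1 (Theorem 2.2 of the paper, `t:wp2`).

The Hellinger distance between the two posterior-type measures
`dμ/dμ0 = Z⁻¹ exp(−Φ)` and `dμ^N/dμ0 = (Z^N)⁻¹ exp(−Φ^N)` is bounded by `C ψ(N)`.
Since the Hellinger distance is independent of the choice of reference measure,
it is expressed here through the densities with respect to `μ0`.
Gaussianity of `μ0` is encoded through the consequences used in the paper:
the conclusion of the Fernique theorem, and positivity of the measure of balls.
-/

open MeasureTheory Real Filter Topology

/-- The Hellinger distance between the measures with densities `p` and `q` with
respect to the reference measure `ν`. -/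
noncomputable def hellinger {X : Type*} [MeasurableSpace X] (ν : Measure X)
    (p q : X → ℝ) : ℝ :=
  Real.sqrt ((1 / 2) * ∫ u, (Real.sqrt (p u) - Real.sqrt (q u)) ^ 2 ∂ν)

lemma exp_neg_sub_abs_le {x y c : ℝ} (hx : c ≤ x) (hy : c ≤ y) :
    |Real.exp (-x) - Real.exp (-y)| ≤ Real.exp (-c) * |x - y| := by
  wlog hxy : x ≤ y generalizing x y
  · rw [abs_sub_comm, abs_sub_comm x y]; exact this hy hx (le_of_not_ge hxy)
  have h1 : Real.exp (-y) ≤ Real.exp (-x) := Real.exp_le_exp.mpr (by linarith)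
  rw [abs_of_nonneg (by linarith), abs_of_nonpos (by linarith)]
  have h2 : 1 - Real.exp (-(y - x)) ≤ y - x := by
    nlinarith [Real.add_one_le_exp (-(y - x))]
  have h5 : 0 ≤ 1 - Real.exp (-(y - x)) := by
    have := Real.exp_le_exp.mpr (show -(y - x) ≤ 0 by linarith)
    simpa using this
  have h3 : Real.exp (-x) - Real.exp (-y) = Real.exp (-x) * (1 - Real.exp (-(y - x))) := by
    rw [mul_sub, mul_one, ← Real.exp_add]; ring_nf
  have h4 : Real.exp (-x) ≤ Real.exp (-c) := Real.exp_le_exp.mpr (by linarith)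
  rw [h3]
  calc Real.exp (-x) * (1 - Real.exp (-(y - x)))
      ≤ Real.exp (-c) * (y - x) :=
        mul_le_mul h4 h2 h5 (Real.exp_pos _).le
    _ = Real.exp (-c) * -(x - y) := by ring


lemma sqrt_inv_diff_le {Z ZN Zb Eψ : ℝ} (hZb : 0 < Zb) (hZ1 : Zb ≤ Z) (hZN1 : Zb ≤ ZN)
    (hdiff : |Z - ZN| ≤ Eψ) :
    (Real.sqrt Z⁻¹ - Real.sqrt ZN⁻¹) ^ 2 ≤ Eψ ^ 2 / (4 * Zb ^ 3) := by
  have hZpos : 0 < Z := lt_of_lt_of_le hZb hZ1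
  have hZNpos : 0 < ZN := lt_of_lt_of_le hZb hZN1
  have hZd2 : (Z - ZN) ^ 2 ≤ Eψ ^ 2 := by
    calc (Z - ZN) ^ 2 = |Z - ZN| ^ 2 := (sq_abs _).symm
      _ ≤ Eψ ^ 2 := pow_le_pow_left₀ (abs_nonneg _) hdiff 2
  set sZ := Real.sqrt Z with hsZdef
  set sN := Real.sqrt ZN with hsNdef
  set b := Real.sqrt Zb with hbdef
  have hb : 0 < b := Real.sqrt_pos.mpr hZb
  have hbs : b ≤ sZ := Real.sqrt_le_sqrt hZ1
  have hbs' : b ≤ sN := Real.sqrt_le_sqrt hZN1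
  have hsZpos : 0 < sZ := lt_of_lt_of_le hb hbs
  have hsNpos : 0 < sN := lt_of_lt_of_le hb hbs'
  have hsZ2 : sZ ^ 2 = Z := Real.sq_sqrt hZpos.le
  have hsN2 : sN ^ 2 = ZN := Real.sq_sqrt hZNpos.le
  have hb2 : b ^ 2 = Zb := Real.sq_sqrt hZb.le
  have hEψ : 0 ≤ Eψ := le_trans (abs_nonneg _) hdiff
  rw [Real.sqrt_inv, Real.sqrt_inv, ← hsZdef, ← hsNdef]
  have key : sZ⁻¹ - sN⁻¹ = (sN - sZ) / (sZ * sN) := by field_simp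
  rw [key, div_pow, div_le_div_iff₀ (pow_pos (mul_pos hsZpos hsNpos) 2) (by positivity)]
  have e2 : (sN - sZ) * (sN + sZ) = ZN - Z := by
    have e2' : (sN - sZ) * (sN + sZ) = sN ^ 2 - sZ ^ 2 := by ring
    rw [e2', hsN2, hsZ2]
  have h6 : (sN - sZ) ^ 2 * (2 * b) ^ 2 ≤ Eψ ^ 2 := by
    calc (sN - sZ) ^ 2 * (2 * b) ^ 2 ≤ (sN - sZ) ^ 2 * (sN + sZ) ^ 2 := by
          apply mul_le_mul_of_nonneg_left _ (sq_nonneg _)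
          apply pow_le_pow_left₀ (by positivity) (by linarith)
      _ = (ZN - Z) ^ 2 := by rw [← mul_pow, e2]
      _ ≤ Eψ ^ 2 := by nlinarith [hZd2]
  have h7 : b ^ 2 * b ^ 2 ≤ (sZ * sN) ^ 2 := by
    nlinarith [mul_le_mul hbs hbs' hb.le hsZpos.le, mul_pos hb hb, mul_pos hsZpos hsNpos]
  rw [← hb2]
  nlinarith [mul_le_mul_of_nonneg_right h6 (pow_nonneg hb.le 4),
    mul_le_mul_of_nonneg_left h7 (sq_nonneg Eψ), sq_nonneg (sN - sZ)]

lemma key_pt (s t x y : ℝ) :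
    (s * x - t * y) ^ 2 ≤ 2 * (s ^ 2 * (x - y) ^ 2) + 2 * ((s - t) ^ 2 * y ^ 2) := by
  nlinarith [sq_nonneg (s * (x - y) - (s - t) * y)]

set_option maxHeartbeats 2000000 in
theorem stmt1
    {X : Type*} [NormedAddCommGroup X] [NormedSpace ℝ X] [CompleteSpace X]
    [MeasurableSpace X] [BorelSpace X]
    (μ0 : Measure X) [IsProbabilityMeasure μ0]
    -- μ0 is a mean-zero Gaussian measure with μ0(X) = 1:
    (hFernique : ∃ a : ℝ, 0 < a ∧ Integrable (fun u => Real.exp (a * ‖u‖ ^ 2)) μ0)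
    (hball : ∀ r : ℝ, 0 < r → 0 < μ0 {u : X | ‖u‖ ≤ r})
    (Φ : X → ℝ) (ΦN : ℕ → X → ℝ)
    (hΦmeas : Measurable Φ) (hΦNmeas : ∀ N, Measurable (ΦN N))
    -- Assumption 2.1(i), with constants uniform in N
    (hlower : ∀ ε : ℝ, 0 < ε → ∃ M : ℝ, ∀ (N : ℕ) (u : X),
      M - ε * ‖u‖ ^ 2 ≤ Φ u ∧ M - ε * ‖u‖ ^ 2 ≤ ΦN N u)
    -- Assumption 2.1(ii), with constants uniform in N
    (hupper : ∀ r : ℝ, 0 < r → ∃ L : ℝ, 0 < L ∧ ∀ (N : ℕ) (u : X),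
      ‖u‖ < r → Φ u ≤ L ∧ ΦN N u ≤ L)
    (ψ : ℕ → ℝ) (hψ : Tendsto ψ atTop (𝓝 0))
    -- forward approximation estimate
    (happrox : ∀ ε : ℝ, 0 < ε → ∃ K : ℝ, 0 < K ∧ ∀ (N : ℕ) (u : X),
      |Φ u - ΦN N u| ≤ K * Real.exp (ε * ‖u‖ ^ 2) * ψ N) :
    ∃ C : ℝ, ∀ N : ℕ,
      hellinger μ0
        (fun u => (∫ u', Real.exp (-(Φ u')) ∂μ0)⁻¹ * Real.exp (-(Φ u)))
        (fun u => (∫ u', Real.exp (-(ΦN N u')) ∂μ0)⁻¹ * Real.exp (-(ΦN N u)))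
        ≤ C * ψ N := by
  obtain ⟨a, ha, hInt⟩ := hFernique
  obtain ⟨M, hM⟩ := hlower (a / 4) (by positivity)
  obtain ⟨K, hK, hKb⟩ := happrox (a / 4) (by positivity)
  obtain ⟨L, hL, hLb⟩ := hupper 1 one_pos
  set S : Set X := {u : X | ‖u‖ ≤ 1 / 2} with hS
  have hSmeas : MeasurableSet S := (isClosed_le continuous_norm continuous_const).measurableSet
  set θ : ℝ := (μ0 S).toReal with hθdef
  have hθ : 0 < θ :=
    ENNReal.toReal_pos (hball (1/2) (by norm_num)).ne' (measure_ne_top _ _)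
  set Ia : ℝ := ∫ u, Real.exp (a * ‖u‖ ^ 2) ∂μ0 with hIadef
  have hIa : 1 ≤ Ia := by
    rw [hIadef]
    calc (1 : ℝ) = ∫ _u, (1 : ℝ) ∂μ0 := by simp
      _ ≤ _ := integral_mono (integrable_const 1) hInt
            (fun u => Real.one_le_exp (by positivity))
  have hIapos : 0 < Ia := lt_of_lt_of_le one_pos hIa
  clear_value S θ Ia
  -- integrability of exp(-f) for f with the lower bound
  have intexp : ∀ f : X → ℝ, Measurable f → (∀ u, M - a / 4 * ‖u‖ ^ 2 ≤ f u) →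
      Integrable (fun u => Real.exp (-(f u))) μ0 := by
    intro f hf hlow
    apply Integrable.mono' (hInt.const_mul (Real.exp (-M)))
      (measurable_exp.comp hf.neg).aestronglyMeasurable
    filter_upwards with u
    simp only [Function.comp_apply, Pi.neg_apply]
    rw [Real.norm_eq_abs, abs_of_pos (Real.exp_pos _), ← Real.exp_add]
    apply Real.exp_le_exp.mpr
    have h0 : (0:ℝ) ≤ ‖u‖ ^ 2 := by positivity
    nlinarith only [hlow u, mul_nonneg ha.le (sq_nonneg ‖u‖), h0]
  have intub : ∀ f : X → ℝ, Measurable f → (∀ u, M - a / 4 * ‖u‖ ^ 2 ≤ f u) →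
      (∫ u, Real.exp (-(f u)) ∂μ0) ≤ Real.exp (-M) * Ia := by
    intro f hf hlow
    calc ∫ u, Real.exp (-(f u)) ∂μ0
        ≤ ∫ u, Real.exp (-M) * Real.exp (a * ‖u‖ ^ 2) ∂μ0 := by
          apply integral_mono (intexp f hf hlow) (hInt.const_mul _)
          intro u
          dsimp only
          rw [← Real.exp_add]
          apply Real.exp_le_exp.mpr
          have h0 : (0:ℝ) ≤ ‖u‖ ^ 2 := by positivity
          nlinarith only [hlow u, mul_nonneg ha.le (sq_nonneg ‖u‖), h0]
      _ = Real.exp (-M) * Ia := by rw [integral_const_mul, ← hIadef]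
  have intlb : ∀ f : X → ℝ, (∀ u, ‖u‖ < 1 → f u ≤ L) →
      Integrable (fun u => Real.exp (-(f u))) μ0 →
      Real.exp (-L) * θ ≤ ∫ u, Real.exp (-(f u)) ∂μ0 := by
    intro f hfL hfi
    have h1 : ∫ u, S.indicator (fun _ => Real.exp (-L)) u ∂μ0 = Real.exp (-L) * θ := by
      rw [integral_indicator_const _ hSmeas]; simp [hθdef, mul_comm, Measure.real]
    rw [← h1]
    apply integral_mono ((integrable_const _).indicator hSmeas) hfi
    intro u
    by_cases hu : u ∈ S
    · rw [Set.indicator_of_mem hu]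
      apply Real.exp_le_exp.mpr
      have hu2 : ‖u‖ ≤ 1/2 := by rw [hS] at hu; exact hu
      have : ‖u‖ < 1 := lt_of_le_of_lt hu2 (by norm_num)
      linarith [hfL u this]
    · rw [Set.indicator_of_notMem hu]
      exact (Real.exp_pos _).le
  set Zb : ℝ := Real.exp (-L) * θ with hZbdef
  have hZbpos : 0 < Zb := mul_pos (Real.exp_pos _) hθ
  set Zt : ℝ := Real.exp (-M) * Ia with hZtdef
  have hZtpos : 0 < Zt := mul_pos (Real.exp_pos _) hIapos
  set E : ℝ := K * Real.exp (-M) * Ia with hEdef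
  have hEpos : 0 < E := mul_pos (mul_pos hK (Real.exp_pos _)) hIapos
  set B : ℝ := 2 * Zb⁻¹ * (K ^ 2 / 4) * Real.exp (-M) * Ia
      + 2 * (E ^ 2 / (4 * Zb ^ 3)) * Zt with hBdef
  have hB : 0 ≤ B := by
    apply add_nonneg
    · exact mul_nonneg (mul_nonneg (mul_nonneg (mul_nonneg (by norm_num)
        (inv_nonneg.mpr hZbpos.le)) (by positivity)) (Real.exp_pos _).le) hIapos.le
    · exact mul_nonneg (mul_nonneg (by norm_num)
        (div_nonneg (sq_nonneg E) (by positivity))) hZtpos.le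
  clear_value Zb Zt E B
  refine ⟨Real.sqrt (B / 2), fun N => ?_⟩
  simp only [hellinger]
  set Z : ℝ := ∫ u', Real.exp (-(Φ u')) ∂μ0 with hZdef
  set ZN : ℝ := ∫ u', Real.exp (-(ΦN N u')) ∂μ0 with hZNdef
  clear_value Z ZN
  have hΦlow : ∀ u, M - a / 4 * ‖u‖ ^ 2 ≤ Φ u := fun u => (hM 0 u).1
  have hΦNlow : ∀ u, M - a / 4 * ‖u‖ ^ 2 ≤ ΦN N u := fun u => (hM N u).2
  have intΦ := intexp Φ hΦmeas hΦlow
  have intΦN := intexp (ΦN N) (hΦNmeas N) hΦNlow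
  have hZ1 : Zb ≤ Z := by rw [hZdef]; exact intlb Φ (fun u hu => (hLb 0 u hu).1) intΦ
  have hZN1 : Zb ≤ ZN := by rw [hZNdef]; exact intlb (ΦN N) (fun u hu => (hLb N u hu).2) intΦN
  have hZ2 : Z ≤ Zt := by rw [hZdef]; exact intub Φ hΦmeas hΦlow
  have hZN2 : ZN ≤ Zt := by rw [hZNdef]; exact intub (ΦN N) (hΦNmeas N) hΦNlow
  have hZpos : 0 < Z := lt_of_lt_of_le hZbpos hZ1
  have hZNpos : 0 < ZN := lt_of_lt_of_le hZbpos hZN1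
  have hψ0 : 0 ≤ ψ N := by
    have h := hKb N 0
    nlinarith only [h, abs_nonneg (Φ 0 - ΦN N 0), mul_pos hK (Real.exp_pos (a / 4 * ‖(0:X)‖ ^ 2))]
  -- bound on |Z - ZN|
  have hZdiff : |Z - ZN| ≤ E * ψ N := by
    have h1 : Z - ZN = ∫ u, (Real.exp (-(Φ u)) - Real.exp (-(ΦN N u))) ∂μ0 := by
      rw [hZdef, hZNdef]; exact (integral_sub intΦ intΦN).symm
    rw [h1]
    have h2 : |∫ u, (Real.exp (-(Φ u)) - Real.exp (-(ΦN N u))) ∂μ0|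
        ≤ ∫ u, |Real.exp (-(Φ u)) - Real.exp (-(ΦN N u))| ∂μ0 := by
      simpa [Real.norm_eq_abs] using
        norm_integral_le_integral_norm (μ := μ0)
          (fun u => Real.exp (-(Φ u)) - Real.exp (-(ΦN N u)))
    refine le_trans h2 ?_
    calc ∫ u, |Real.exp (-(Φ u)) - Real.exp (-(ΦN N u))| ∂μ0
        ≤ ∫ u, (K * Real.exp (-M) * ψ N) * Real.exp (a * ‖u‖ ^ 2) ∂μ0 := by
          apply integral_mono_of_nonneg (ae_of_all _ fun u => abs_nonneg _)
            (hInt.const_mul _) (ae_of_all _ ?_)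
          intro u
          dsimp only
          have hA := exp_neg_sub_abs_le (hΦlow u) (hΦNlow u)
          have hB2 := hKb N u
          have he : Real.exp (-(M - a / 4 * ‖u‖ ^ 2))
              = Real.exp (-M) * Real.exp (a / 4 * ‖u‖ ^ 2) := by
            rw [← Real.exp_add]; ring_nf
          have he2 : Real.exp (a / 4 * ‖u‖ ^ 2) * Real.exp (a / 4 * ‖u‖ ^ 2)
              ≤ Real.exp (a * ‖u‖ ^ 2) := by
            rw [← Real.exp_add]
            apply Real.exp_le_exp.mpr
            nlinarith [sq_nonneg ‖u‖]
          calc |Real.exp (-(Φ u)) - Real.exp (-(ΦN N u))|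
              ≤ Real.exp (-(M - a / 4 * ‖u‖ ^ 2)) * |Φ u - ΦN N u| := hA
            _ ≤ Real.exp (-(M - a / 4 * ‖u‖ ^ 2))
                * (K * Real.exp (a / 4 * ‖u‖ ^ 2) * ψ N) :=
                mul_le_mul_of_nonneg_left hB2 (Real.exp_pos _).le
            _ = (K * Real.exp (-M) * ψ N)
                * (Real.exp (a / 4 * ‖u‖ ^ 2) * Real.exp (a / 4 * ‖u‖ ^ 2)) := by
                rw [he]; ring
            _ ≤ (K * Real.exp (-M) * ψ N) * Real.exp (a * ‖u‖ ^ 2) := by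
                apply mul_le_mul_of_nonneg_left he2
                exact mul_nonneg (mul_nonneg hK.le (Real.exp_pos _).le) hψ0
      _ = E * ψ N := by rw [integral_const_mul, ← hIadef, hEdef]; ring
  -- bound on the difference of the normalizations
  have hD : (Real.sqrt Z⁻¹ - Real.sqrt ZN⁻¹) ^ 2 ≤ (E * ψ N) ^ 2 / (4 * Zb ^ 3) :=
    sqrt_inv_diff_le hZbpos hZ1 hZN1 hZdiff
  -- pointwise bound on the Hellinger integrand
  have hpt : ∀ u : X,
      (Real.sqrt (Z⁻¹ * Real.exp (-(Φ u))) - Real.sqrt (ZN⁻¹ * Real.exp (-(ΦN N u)))) ^ 2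
      ≤ (2 * Zb⁻¹ * (K ^ 2 / 4) * Real.exp (-M) * ψ N ^ 2) * Real.exp (a * ‖u‖ ^ 2)
        + (2 * (Real.sqrt Z⁻¹ - Real.sqrt ZN⁻¹) ^ 2) * Real.exp (-(ΦN N u)) := by
    intro u
    rw [Real.sqrt_mul (inv_nonneg.mpr hZpos.le), Real.sqrt_mul (inv_nonneg.mpr hZNpos.le),
      ← Real.exp_half, ← Real.exp_half]
    have step1 := key_pt (Real.sqrt Z⁻¹) (Real.sqrt ZN⁻¹)
      (Real.exp (-(Φ u) / 2)) (Real.exp (-(ΦN N u) / 2))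
    have hs2 : (Real.sqrt Z⁻¹) ^ 2 = Z⁻¹ := Real.sq_sqrt (inv_nonneg.mpr hZpos.le)
    have hy2 : (Real.exp (-(ΦN N u) / 2)) ^ 2 = Real.exp (-(ΦN N u)) := by
      rw [sq, ← Real.exp_add]; ring_nf
    have hsle : Z⁻¹ ≤ Zb⁻¹ := inv_anti₀ hZbpos hZ1
    have hxy2 : (Real.exp (-(Φ u) / 2) - Real.exp (-(ΦN N u) / 2)) ^ 2
        ≤ (K ^ 2 / 4) * Real.exp (-M) * ψ N ^ 2 * Real.exp (a * ‖u‖ ^ 2) := by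
      have e1 : -(Φ u) / 2 = -(Φ u / 2) := by ring
      have e1' : -(ΦN N u) / 2 = -(ΦN N u / 2) := by ring
      rw [e1, e1']
      have hA := exp_neg_sub_abs_le (x := Φ u / 2) (y := ΦN N u / 2)
        (c := (M - a / 4 * ‖u‖ ^ 2) / 2) (by linarith [(hM N u).1]) (by linarith [(hM N u).2])
      have hA2 : (Real.exp (-(Φ u / 2)) - Real.exp (-(ΦN N u / 2))) ^ 2
          ≤ (Real.exp (-((M - a / 4 * ‖u‖ ^ 2) / 2)) * |Φ u / 2 - ΦN N u / 2|) ^ 2 := by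
        rw [← sq_abs]
        exact pow_le_pow_left₀ (abs_nonneg _) hA 2
      refine le_trans hA2 ?_
      have e3 : (Real.exp (-((M - a / 4 * ‖u‖ ^ 2) / 2))) ^ 2
          = Real.exp (-M) * Real.exp (a / 4 * ‖u‖ ^ 2) := by
        rw [sq, ← Real.exp_add, ← Real.exp_add]; ring_nf
      have e4 : |Φ u / 2 - ΦN N u / 2| ^ 2 = (Φ u - ΦN N u) ^ 2 / 4 := by
        rw [sq_abs]; ring
      have e5 : (Φ u - ΦN N u) ^ 2 ≤ (K * Real.exp (a / 4 * ‖u‖ ^ 2) * ψ N) ^ 2 := by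
        rw [← sq_abs]
        exact pow_le_pow_left₀ (abs_nonneg _) (hKb N u) 2
      rw [mul_pow, e3, e4]
      have he2 : Real.exp (a / 4 * ‖u‖ ^ 2)
          * (Real.exp (a / 4 * ‖u‖ ^ 2) * Real.exp (a / 4 * ‖u‖ ^ 2))
          ≤ Real.exp (a * ‖u‖ ^ 2) := by
        rw [← Real.exp_add, ← Real.exp_add]
        apply Real.exp_le_exp.mpr
        nlinarith only [mul_nonneg ha.le (sq_nonneg ‖u‖)]
      calc Real.exp (-M) * Real.exp (a / 4 * ‖u‖ ^ 2) * ((Φ u - ΦN N u) ^ 2 / 4)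
          ≤ Real.exp (-M) * Real.exp (a / 4 * ‖u‖ ^ 2)
            * ((K * Real.exp (a / 4 * ‖u‖ ^ 2) * ψ N) ^ 2 / 4) := by
            apply mul_le_mul_of_nonneg_left (by linarith) (by positivity)
        _ = (K ^ 2 / 4) * Real.exp (-M) * ψ N ^ 2
            * (Real.exp (a / 4 * ‖u‖ ^ 2)
              * (Real.exp (a / 4 * ‖u‖ ^ 2) * Real.exp (a / 4 * ‖u‖ ^ 2))) := by ring
        _ ≤ (K ^ 2 / 4) * Real.exp (-M) * ψ N ^ 2 * Real.exp (a * ‖u‖ ^ 2) := by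
            apply mul_le_mul_of_nonneg_left he2 (by positivity)
    rw [hs2, hy2] at step1
    have hprod : Z⁻¹ * (Real.exp (-(Φ u) / 2) - Real.exp (-(ΦN N u) / 2)) ^ 2
        ≤ Zb⁻¹ * ((K ^ 2 / 4) * Real.exp (-M) * ψ N ^ 2 * Real.exp (a * ‖u‖ ^ 2)) :=
      mul_le_mul hsle hxy2 (sq_nonneg _) (inv_nonneg.mpr hZbpos.le)
    linarith only [step1, hprod]
  -- integrate the pointwise bound
  have hint1 : (∫ u, (Real.sqrt (Z⁻¹ * Real.exp (-(Φ u)))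
        - Real.sqrt (ZN⁻¹ * Real.exp (-(ΦN N u)))) ^ 2 ∂μ0)
      ≤ (2 * Zb⁻¹ * (K ^ 2 / 4) * Real.exp (-M) * ψ N ^ 2) * Ia
        + (2 * (Real.sqrt Z⁻¹ - Real.sqrt ZN⁻¹) ^ 2) * ZN := by
    calc (∫ u, (Real.sqrt (Z⁻¹ * Real.exp (-(Φ u)))
          - Real.sqrt (ZN⁻¹ * Real.exp (-(ΦN N u)))) ^ 2 ∂μ0)
        ≤ ∫ u, ((2 * Zb⁻¹ * (K ^ 2 / 4) * Real.exp (-M) * ψ N ^ 2) * Real.exp (a * ‖u‖ ^ 2)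
            + (2 * (Real.sqrt Z⁻¹ - Real.sqrt ZN⁻¹) ^ 2) * Real.exp (-(ΦN N u))) ∂μ0 :=
          integral_mono_of_nonneg (ae_of_all _ fun u => sq_nonneg _)
            ((hInt.const_mul _).add (intΦN.const_mul _)) (ae_of_all _ hpt)
      _ = (2 * Zb⁻¹ * (K ^ 2 / 4) * Real.exp (-M) * ψ N ^ 2) * Ia
          + (2 * (Real.sqrt Z⁻¹ - Real.sqrt ZN⁻¹) ^ 2) * ZN := by
          rw [integral_add (hInt.const_mul _) (intΦN.const_mul _),
            integral_const_mul, integral_const_mul, ← hIadef, ← hZNdef]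
  have hDZ : (2 * (Real.sqrt Z⁻¹ - Real.sqrt ZN⁻¹) ^ 2) * ZN
      ≤ 2 * (E ^ 2 / (4 * Zb ^ 3)) * Zt * ψ N ^ 2 := by
    have h1 : (Real.sqrt Z⁻¹ - Real.sqrt ZN⁻¹) ^ 2 ≤ E ^ 2 * ψ N ^ 2 / (4 * Zb ^ 3) := by
      calc (Real.sqrt Z⁻¹ - Real.sqrt ZN⁻¹) ^ 2 ≤ (E * ψ N) ^ 2 / (4 * Zb ^ 3) := hD
        _ = E ^ 2 * ψ N ^ 2 / (4 * Zb ^ 3) := by ring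
    have h2 : 0 ≤ E ^ 2 * ψ N ^ 2 / (4 * Zb ^ 3) :=
      div_nonneg (by positivity) (by nlinarith only [pow_pos hZbpos 3])
    have h3 := mul_le_mul h1 hZN2 hZNpos.le h2
    calc (2 * (Real.sqrt Z⁻¹ - Real.sqrt ZN⁻¹) ^ 2) * ZN
        = 2 * ((Real.sqrt Z⁻¹ - Real.sqrt ZN⁻¹) ^ 2 * ZN) := by ring
      _ ≤ 2 * (E ^ 2 * ψ N ^ 2 / (4 * Zb ^ 3) * Zt) := by linarith only [h3]
      _ = 2 * (E ^ 2 / (4 * Zb ^ 3)) * Zt * ψ N ^ 2 := by ring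
  have hfin : (∫ u, (Real.sqrt (Z⁻¹ * Real.exp (-(Φ u)))
        - Real.sqrt (ZN⁻¹ * Real.exp (-(ΦN N u)))) ^ 2 ∂μ0) ≤ B * ψ N ^ 2 := by
    rw [hBdef]
    linarith only [hint1, hDZ]
  calc Real.sqrt ((1 / 2) * ∫ u, (Real.sqrt (Z⁻¹ * Real.exp (-(Φ u)))
        - Real.sqrt (ZN⁻¹ * Real.exp (-(ΦN N u)))) ^ 2 ∂μ0)
      ≤ Real.sqrt ((B / 2) * ψ N ^ 2) := Real.sqrt_le_sqrt (by linarith)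
    _ = Real.sqrt (B / 2) * ψ N := by
        rw [Real.sqrt_mul (by linarith : (0:ℝ) ≤ B / 2), Real.sqrt_sq hψ0]
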